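/- Let X_α, X_β ∈ F and f ∈ G_κ. Then J(X_α∘f, X_β) ≤ C J(X_α, X_β) for a constant C ≥ 1 depending only on κ, where J(X_α, X_β) = inf_{f₁,f₂∈G}(‖X_α∘f₁ - X_β‖_E + ‖X_α - X_β∘f₂‖_E). -/

import Mathlib

open MeasureTheory

/-- A triple of Lagrangian coordinates. -/
structure LagCoord where
  y : ℝ → ℝ
  U : ℝ → ℝ
  H : ℝ → ℝ

/-- `X ∈ F₀`: Lagrangian coordinates in `E = V × H¹ × V` with `y_ξ, H_ξ ≥ 0`,
`y_ξ + H_ξ = 1` and `y_ξ H_ξ = y_ξ² U² + U_ξ²` a.e., `H(-∞) = 0`, and the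
normalization `y + H = id`. -/
def InF0 (X : LagCoord) : Prop :=
  (∃ K : NNReal, LipschitzWith K X.y) ∧ (∃ K : NNReal, LipschitzWith K X.U) ∧
  (∃ K : NNReal, LipschitzWith K X.H) ∧
  (∃ C : ℝ, ∀ x, |X.y x - x| ≤ C) ∧ (∃ C : ℝ, ∀ x, |X.H x| ≤ C) ∧
  MemLp (fun x => deriv X.y x - 1) 2 (volume : Measure ℝ) ∧
  MemLp (deriv X.H) 2 (volume : Measure ℝ) ∧
  MemLp X.U 2 (volume : Measure ℝ) ∧
  MemLp (deriv X.U) 2 (volume : Measure ℝ) ∧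
  (∀ᵐ ξ ∂(volume : Measure ℝ),
    0 ≤ deriv X.y ξ ∧ 0 ≤ deriv X.H ξ ∧ deriv X.y ξ + deriv X.H ξ = 1 ∧
    deriv X.y ξ * deriv X.H ξ =
      (deriv X.y ξ) ^ 2 * (X.U ξ) ^ 2 + (deriv X.U ξ) ^ 2) ∧
  Filter.Tendsto X.H Filter.atBot (nhds 0) ∧
  (∀ ξ, X.y ξ + X.H ξ = ξ)

/-- Relabeling: `X∘f = (y∘f, U∘f, H∘f)`. -/
def comp (X : LagCoord) (f : ℝ → ℝ) : LagCoord :=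
  ⟨X.y ∘ f, X.U ∘ f, X.H ∘ f⟩

/-- `f ∈ G`: the relabeling group. -/
def InG (f : ℝ ≃ₜ ℝ) : Prop :=
  ((∃ C : ℝ, ∀ x, |f x - x| ≤ C) ∧ ∃ K : NNReal, LipschitzWith K (fun x => f x - x)) ∧
  ((∃ C : ℝ, ∀ x, |f.symm x - x| ≤ C) ∧
    ∃ K : NNReal, LipschitzWith K (fun x => f.symm x - x)) ∧
  MemLp (fun x => deriv (⇑f) x - 1) 2 (volume : Measure ℝ)

/-- The `L^∞` norm of the difference of two Lagrangian triples:
`‖X_α - X_β‖_{L^∞} = ‖y_α - y_β‖_∞ + ‖U_α - U_β‖_∞ + ‖H_α - H_β‖_∞`. -/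
noncomputable def LinfDiff (A B : LagCoord) : ℝ :=
  (⨆ x : ℝ, |A.y x - B.y x|) + (⨆ x : ℝ, |A.U x - B.U x|) +
    (⨆ x : ℝ, |A.H x - B.H x|)

/-- The `V`-norm `‖g‖_V = ‖g‖_{L^∞} + ‖g'‖_{L²}`. -/
noncomputable def Vnorm (g : ℝ → ℝ) : ℝ :=
  (⨆ x : ℝ, |g x|) + (∫ x : ℝ, (deriv g x) ^ 2) ^ (1/2 : ℝ)

/-- The `H¹`-norm. -/
noncomputable def H1norm (g : ℝ → ℝ) : ℝ :=
  (∫ x : ℝ, ((g x) ^ 2 + (deriv g x) ^ 2)) ^ (1/2 : ℝ)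

/-- The `E`-norm of the difference `X_α - X_β` (the `ζ` components differ by
`y_α - y_β`). -/
noncomputable def EDiff (A B : LagCoord) : ℝ :=
  Vnorm (fun x => A.y x - B.y x) + H1norm (fun x => A.U x - B.U x) +
    Vnorm (fun x => A.H x - B.H x)

/-- `J(X_α,X_β) = inf_{f₁,f₂ ∈ G} (‖X_α∘f₁ - X_β‖_E + ‖X_α - X_β∘f₂‖_E)`. -/
noncomputable def Jdist (A B : LagCoord) : ℝ :=
  sInf {r : ℝ | ∃ f₁ f₂ : ℝ ≃ₜ ℝ, InG f₁ ∧ InG f₂ ∧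
    r = EDiff (comp A ⇑f₁) B + EDiff A (comp B ⇑f₂)}

/-- `g ∈ W^{1,∞}(ℝ)` with `‖g‖_{W^{1,∞}} ≤ a`. -/
def W1inftyNormLE (g : ℝ → ℝ) (a : ℝ) : Prop :=
  ∃ b c : ℝ, 0 ≤ b ∧ 0 ≤ c ∧ b + c ≤ a ∧ (∀ x, |g x| ≤ b) ∧
    LipschitzWith c.toNNReal g

/-- `f ∈ G_κ`: `f ∈ G` with
`‖f - id‖_{W^{1,∞}} + ‖f⁻¹ - id‖_{W^{1,∞}} ≤ κ`. -/
def InGkappa (f : ℝ ≃ₜ ℝ) (κ : ℝ) : Prop :=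
  (∃ a b : ℝ, 0 ≤ a ∧ 0 ≤ b ∧ a + b ≤ κ ∧
    W1inftyNormLE (fun x => f x - x) a ∧
    W1inftyNormLE (fun x => f.symm x - x) b) ∧
  MemLp (fun x => deriv (⇑f) x - 1) 2 (volume : Measure ℝ)

/-- `X ∈ F ⊂ E`: each component is Lipschitz (the set `F` lies in
`[W^{1,∞}]³`), `ζ = y - id` and `H` are bounded, and the relevant derivatives
and `U` belong to `L²`. -/
def InE (X : LagCoord) : Prop :=
  (∃ K : NNReal, LipschitzWith K X.y) ∧ (∃ K : NNReal, LipschitzWith K X.U) ∧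
  (∃ K : NNReal, LipschitzWith K X.H) ∧
  (∃ C : ℝ, ∀ x, |X.y x - x| ≤ C) ∧ (∃ C : ℝ, ∀ x, |X.H x| ≤ C) ∧
  MemLp (fun x => deriv X.y x - 1) 2 (volume : Measure ℝ) ∧
  MemLp (deriv X.H) 2 (volume : Measure ℝ) ∧
  MemLp X.U 2 (volume : Measure ℝ) ∧
  MemLp (deriv X.U) 2 (volume : Measure ℝ)


lemma lem_image {K : NNReal} {φ : ℝ → ℝ} (h : LipschitzWith K φ) (s : Set ℝ) :
    volume (φ '' s) ≤ K * volume s := by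
  have h1 := h.hausdorffMeasure_image_le (zero_le_one) s
  rw [MeasureTheory.hausdorffMeasure_real] at h1
  simpa using h1

lemma lem_preimage {L : NNReal} (e : ℝ ≃ₜ ℝ) (hL : LipschitzWith L ⇑e.symm) (s : Set ℝ) :
    volume (⇑e ⁻¹' s) ≤ L * volume s := by
  rw [← Homeomorph.image_symm]; exact lem_image hL s

lemma lem_map_le {L : NNReal} (e : ℝ ≃ₜ ℝ) (hL : LipschitzWith L ⇑e.symm) :
    Measure.map ⇑e volume ≤ (L : ENNReal) • volume := by
  refine Measure.le_intro (fun s hs _ => ?_)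
  rw [Measure.map_apply e.measurable hs]
  simpa using lem_preimage e hL s

lemma lem_lintegral_comp {L : NNReal} (e : ℝ ≃ₜ ℝ) (hL : LipschitzWith L ⇑e.symm)
    {h : ℝ → ENNReal} (hm : Measurable h) :
    ∫⁻ x, h (e x) ≤ L * ∫⁻ x, h x := by
  have h1 : ∫⁻ x, h (e x) = ∫⁻ x, h x ∂(Measure.map ⇑e volume) :=
    (lintegral_map hm e.measurable).symm
  rw [h1]
  calc ∫⁻ x, h x ∂(Measure.map ⇑e volume) ≤ ∫⁻ x, h x ∂((L : ENNReal) • volume) :=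
        lintegral_mono' (lem_map_le e hL) le_rfl
    _ = L * ∫⁻ x, h x := by simp [lintegral_smul_measure]; exact ENNReal.smul_def _ _

lemma lem_null_preimage {L : NNReal} (e : ℝ ≃ₜ ℝ) (hL : LipschitzWith L ⇑e.symm)
    {s : Set ℝ} (hs : volume s = 0) : volume (⇑e ⁻¹' s) = 0 :=
  le_antisymm (by simpa [hs] using lem_preimage e hL s) zero_le

lemma lem_ae_comp {L : NNReal} (e : ℝ ≃ₜ ℝ) (hL : LipschitzWith L ⇑e.symm)
    {p : ℝ → Prop} (hp : ∀ᵐ y, p y) : ∀ᵐ x, p (e x) := by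
  rw [MeasureTheory.ae_iff] at hp ⊢
  exact le_antisymm (le_trans (measure_mono (fun x hx => hx)) (le_of_eq (lem_null_preimage e hL hp))) zero_le

-- |deriv g x| ≤ K for K-Lipschitz g
lemma lem_deriv_le {K : NNReal} {g : ℝ → ℝ} (hg : LipschitzWith K g) (x : ℝ) :
    |deriv g x| ≤ K := by
  by_cases hd : DifferentiableAt ℝ g x
  · have h1 : ‖fderiv ℝ g x‖ ≤ K := norm_fderiv_le_of_lipschitz ℝ hg
    have h2 : deriv g x = fderiv ℝ g x 1 := by rw [← fderiv_apply_one_eq_deriv]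
    rw [← Real.norm_eq_abs, h2]
    calc ‖fderiv ℝ g x 1‖ ≤ ‖fderiv ℝ g x‖ * ‖(1:ℝ)‖ := (fderiv ℝ g x).le_opNorm 1
      _ ≤ K := by simpa using h1
  · simp [deriv_zero_of_not_differentiableAt hd, K.coe_nonneg]

-- chain rule a.e.
lemma lem_chain {L K : NNReal} (e : ℝ ≃ₜ ℝ) (hLe : LipschitzWith L ⇑e)
    (hLs : LipschitzWith L ⇑e.symm) {g : ℝ → ℝ} (hg : LipschitzWith K g) :
    ∀ᵐ x, deriv (g ∘ ⇑e) x = deriv g (e x) * deriv e x := by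
  have h1 : ∀ᵐ y, DifferentiableAt ℝ g y := hg.ae_differentiableAt
  have h2 : ∀ᵐ x, DifferentiableAt ℝ g (e x) := by
    have := lem_ae_comp e hLs h1; exact this
  have h3 : ∀ᵐ x, DifferentiableAt ℝ (⇑e) x := hLe.ae_differentiableAt
  filter_upwards [h2, h3] with x hgx hex
  exact (hgx.hasDerivAt.comp x hex.hasDerivAt).deriv
-- lintegral bounds
lemma lem_lint_comp_sq {L : NNReal} (e : ℝ ≃ₜ ℝ) (hLs : LipschitzWith L ⇑e.symm)
    {g : ℝ → ℝ} (hm : Measurable g) :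
    ∫⁻ x, ENNReal.ofReal ((g (e x)) ^ 2) ≤ L * ∫⁻ x, ENNReal.ofReal ((g x) ^ 2) :=
  lem_lintegral_comp e hLs (by measurability)

lemma lem_lint_deriv_sq {L K : NNReal} (e : ℝ ≃ₜ ℝ) (hLe : LipschitzWith L ⇑e)
    (hLs : LipschitzWith L ⇑e.symm) {g : ℝ → ℝ} (hg : LipschitzWith K g) :
    ∫⁻ x, ENNReal.ofReal ((deriv (g ∘ ⇑e) x) ^ 2)
      ≤ (L:ENNReal) ^ 3 * ∫⁻ x, ENNReal.ofReal ((deriv g x) ^ 2) := by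
  have step1 : ∫⁻ x, ENNReal.ofReal ((deriv (g ∘ ⇑e) x) ^ 2)
      ≤ (L:ENNReal) ^ 2 * ∫⁻ x, ENNReal.ofReal ((deriv g (e x)) ^ 2) := by
    rw [← lintegral_const_mul' _ _ (by simp : ((L:ENNReal)^2) ≠ ⊤)]
    refine lintegral_mono_ae ?_
    filter_upwards [lem_chain e hLe hLs hg] with x hx
    rw [hx]
    have h1 : (deriv g (e x) * deriv (⇑e) x) ^ 2 ≤ (L:ℝ)^2 * (deriv g (e x))^2 := by
      have h2 : |deriv (⇑e) x| ≤ L := lem_deriv_le hLe x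
      have h3 : (deriv (⇑e) x)^2 ≤ (L:ℝ)^2 := by
        rw [← sq_abs]; exact pow_le_pow_left₀ (abs_nonneg _) h2 2
      calc (deriv g (e x) * deriv (⇑e) x) ^ 2 = (deriv g (e x))^2 * (deriv (⇑e) x)^2 := by ring
        _ ≤ (deriv g (e x))^2 * (L:ℝ)^2 := by nlinarith [sq_nonneg (deriv g (e x))]
        _ = (L:ℝ)^2 * (deriv g (e x))^2 := by ring
    calc ENNReal.ofReal ((deriv g (e x) * deriv (⇑e) x) ^ 2)
        ≤ ENNReal.ofReal ((L:ℝ)^2 * (deriv g (e x))^2) := ENNReal.ofReal_le_ofReal h1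
      _ = (L:ENNReal)^2 * ENNReal.ofReal ((deriv g (e x))^2) := by
          rw [ENNReal.ofReal_mul (by positivity)]
          congr 1
          rw [show ((L:ℝ)^2) = ((L^2 : NNReal) : ℝ) by push_cast; ring,
            ENNReal.ofReal_coe_nnreal]
          push_cast; ring
  have step2 : ∫⁻ x, ENNReal.ofReal ((deriv g (e x)) ^ 2)
      ≤ L * ∫⁻ x, ENNReal.ofReal ((deriv g x) ^ 2) :=
    lem_lintegral_comp e hLs (by measurability)
  calc ∫⁻ x, ENNReal.ofReal ((deriv (g ∘ ⇑e) x) ^ 2)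
      ≤ (L:ENNReal) ^ 2 * ∫⁻ x, ENNReal.ofReal ((deriv g (e x)) ^ 2) := step1
    _ ≤ (L:ENNReal) ^ 2 * (L * ∫⁻ x, ENNReal.ofReal ((deriv g x) ^ 2)) :=
        mul_le_mul_right step2 _
    _ = (L:ENNReal) ^ 3 * ∫⁻ x, ENNReal.ofReal ((deriv g x) ^ 2) := by ring
-- Bochner transfer
lemma lem_transfer {φ ψ : ℝ → ℝ} (hφm : Measurable φ) (hψm : Measurable ψ)
    (hφ0 : ∀ x, 0 ≤ φ x) (hψ0 : ∀ x, 0 ≤ ψ x) {M M' : NNReal}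
    (h1 : ∫⁻ x, ENNReal.ofReal (φ x) ≤ M * ∫⁻ x, ENNReal.ofReal (ψ x))
    (h2 : ∫⁻ x, ENNReal.ofReal (ψ x) ≤ M' * ∫⁻ x, ENNReal.ofReal (φ x)) :
    ∫ x, φ x ≤ (M : ℝ) * ∫ x, ψ x := by
  set a := ∫⁻ x, ENNReal.ofReal (φ x) with ha
  set b := ∫⁻ x, ENNReal.ofReal (ψ x) with hb
  have hφb : ∫ x, φ x = a.toReal :=
    integral_eq_lintegral_of_nonneg_ae (Filter.Eventually.of_forall hφ0)
      hφm.aestronglyMeasurable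
  have hψb : ∫ x, ψ x = b.toReal :=
    integral_eq_lintegral_of_nonneg_ae (Filter.Eventually.of_forall hψ0)
      hψm.aestronglyMeasurable
  by_cases hbf : b = ⊤
  · have haf : a = ⊤ := by
      by_contra haf
      rw [hbf] at h2
      have : (M' : ENNReal) * a ≠ ⊤ := ENNReal.mul_ne_top (by simp) haf
      exact this (top_le_iff.mp h2)
    rw [hφb, hψb, haf, hbf]
    simp
  · have haf : a ≠ ⊤ := by
      intro hat
      rw [hat] at h1
      exact hbf (by
        have : (M : ENNReal) * b = ⊤ := top_le_iff.mp h1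
        rcases ENNReal.mul_eq_top.mp this with ⟨_, h⟩ | ⟨h, _⟩
        · exact h
        · simp at h)
    rw [hφb, hψb]
    have := ENNReal.toReal_mono (ENNReal.mul_ne_top (by simp) hbf) h1
    rwa [ENNReal.toReal_mul, ENNReal.coe_toReal] at this

-- Bochner transfer
lemma lem_sup_nonneg (g : ℝ → ℝ) : 0 ≤ ⨆ x, |g x| :=
  Real.iSup_nonneg (fun x => abs_nonneg _)

lemma lem_sup_comp (e : ℝ ≃ₜ ℝ) (g : ℝ → ℝ) : (⨆ x, |g (e x)|) = ⨆ x, |g x| := by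
  rw [iSup, iSup]
  congr 1
  exact Function.Surjective.range_comp e.surjective (fun y => |g y|)

lemma lem_lint_h1 {L K : NNReal} (e : ℝ ≃ₜ ℝ) (hLe : LipschitzWith L ⇑e)
    (hLs : LipschitzWith L ⇑e.symm) {g : ℝ → ℝ} (hg : LipschitzWith K g) :
    ∫⁻ x, ENNReal.ofReal ((g (e x)) ^ 2 + (deriv (g ∘ ⇑e) x) ^ 2)
      ≤ ((L:ENNReal) ^ 3 + L) * ∫⁻ x, ENNReal.ofReal ((g x) ^ 2 + (deriv g x) ^ 2) := by
  have hgm : Measurable g := hg.continuous.measurable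
  have e1 : ∀ x : ℝ, ENNReal.ofReal ((g (e x)) ^ 2 + (deriv (g ∘ ⇑e) x) ^ 2)
      = ENNReal.ofReal ((g (e x)) ^ 2) + ENNReal.ofReal ((deriv (g ∘ ⇑e) x) ^ 2) := by
    intro x; rw [ENNReal.ofReal_add (by positivity) (by positivity)]
  have m1 : Measurable fun x => ENNReal.ofReal ((g (e x)) ^ 2) :=
    (((hgm.comp e.measurable)).pow_const 2).ennreal_ofReal
  calc ∫⁻ x, ENNReal.ofReal ((g (e x)) ^ 2 + (deriv (g ∘ ⇑e) x) ^ 2)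
      = ∫⁻ x, (ENNReal.ofReal ((g (e x)) ^ 2) + ENNReal.ofReal ((deriv (g ∘ ⇑e) x) ^ 2)) := by
        simp only [e1]
    _ = (∫⁻ x, ENNReal.ofReal ((g (e x)) ^ 2)) + ∫⁻ x, ENNReal.ofReal ((deriv (g ∘ ⇑e) x) ^ 2) :=
        lintegral_add_left m1 _
    _ ≤ (L : ENNReal) * (∫⁻ x, ENNReal.ofReal ((g x) ^ 2))
          + (L:ENNReal) ^ 3 * ∫⁻ x, ENNReal.ofReal ((deriv g x) ^ 2) :=
        add_le_add (lem_lint_comp_sq e hLs hgm) (lem_lint_deriv_sq e hLe hLs hg)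
    _ ≤ (L : ENNReal) * (∫⁻ x, ENNReal.ofReal ((g x) ^ 2 + (deriv g x) ^ 2))
          + (L:ENNReal) ^ 3 * ∫⁻ x, ENNReal.ofReal ((g x) ^ 2 + (deriv g x) ^ 2) := by
        refine add_le_add (mul_le_mul_right (lintegral_mono fun x => ?_) _)
          (mul_le_mul_right (lintegral_mono fun x => ?_) _)
        · exact ENNReal.ofReal_le_ofReal (by nlinarith [sq_nonneg (deriv g x)])
        · exact ENNReal.ofReal_le_ofReal (by nlinarith [sq_nonneg (g x)])
    _ = ((L:ENNReal) ^ 3 + L) * ∫⁻ x, ENNReal.ofReal ((g x) ^ 2 + (deriv g x) ^ 2) := by ring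

noncomputable def CL (L : NNReal) : ℝ := max 1 (((L:ℝ) ^ 3 + (L:ℝ)) ^ (1/2 : ℝ))

lemma CL_one_le (L : NNReal) : 1 ≤ CL L := le_max_left _ _

lemma lem_vnorm_comp {L K : NNReal} (e : ℝ ≃ₜ ℝ) (hLe : LipschitzWith L ⇑e)
    (hLs : LipschitzWith L ⇑e.symm) {g : ℝ → ℝ} (hg : LipschitzWith K g) :
    Vnorm (g ∘ ⇑e) ≤ CL L * Vnorm g := by
  have hcomp : ((g ∘ ⇑e) ∘ ⇑e.symm) = g := by
    funext x; simp [Function.comp, e.apply_symm_apply]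
  have hLs' : LipschitzWith L ⇑e.symm.symm := by rwa [Homeomorph.symm_symm]
  have h1 : ∫⁻ x, ENNReal.ofReal ((deriv (g ∘ ⇑e) x) ^ 2)
      ≤ ((L^3 + L : NNReal) : ENNReal) * ∫⁻ x, ENNReal.ofReal ((deriv g x) ^ 2) := by
    refine le_trans (lem_lint_deriv_sq e hLe hLs hg) (mul_le_mul_left ?_ _)
    push_cast
    exact le_add_of_nonneg_right zero_le
  have h2 : ∫⁻ x, ENNReal.ofReal ((deriv g x) ^ 2)
      ≤ ((L^3 + L : NNReal) : ENNReal) * ∫⁻ x, ENNReal.ofReal ((deriv (g ∘ ⇑e) x) ^ 2) := by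
    have := lem_lint_deriv_sq e.symm hLs hLs' (hg.comp hLe)
    rw [hcomp] at this
    refine le_trans this (mul_le_mul_left ?_ _)
    push_cast
    exact le_add_of_nonneg_right zero_le
  have hint : ∫ x, (deriv (g ∘ ⇑e) x) ^ 2 ≤ ((L^3 + L : NNReal) : ℝ) * ∫ x, (deriv g x) ^ 2 :=
    lem_transfer ((measurable_deriv _).pow_const 2) ((measurable_deriv _).pow_const 2)
      (fun x => sq_nonneg _) (fun x => sq_nonneg _) h1 h2
  have hiψ : 0 ≤ ∫ x, (deriv g x) ^ 2 := integral_nonneg fun x => sq_nonneg _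
  have hiφ : 0 ≤ ∫ x, (deriv (g ∘ ⇑e) x) ^ 2 := integral_nonneg fun x => sq_nonneg _
  have hrpow : (∫ x, (deriv (g ∘ ⇑e) x) ^ 2) ^ (1/2:ℝ)
      ≤ (((L:ℝ)^3 + L) ^ (1/2:ℝ)) * (∫ x, (deriv g x) ^ 2) ^ (1/2:ℝ) := by
    calc (∫ x, (deriv (g ∘ ⇑e) x) ^ 2) ^ (1/2:ℝ)
        ≤ (((L^3 + L : NNReal) : ℝ) * ∫ x, (deriv g x) ^ 2) ^ (1/2:ℝ) :=
          Real.rpow_le_rpow hiφ hint (by norm_num)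
      _ = (((L:ℝ)^3 + L) ^ (1/2:ℝ)) * (∫ x, (deriv g x) ^ 2) ^ (1/2:ℝ) := by
          rw [Real.mul_rpow (by positivity) hiψ]; push_cast; ring_nf
  have hsup : (⨆ x, |(g ∘ ⇑e) x|) = ⨆ x, |g x| := lem_sup_comp e g
  unfold Vnorm
  rw [hsup]
  have hS : 0 ≤ ⨆ x, |g x| := lem_sup_nonneg g
  have hI : 0 ≤ (∫ x, (deriv g x) ^ 2) ^ (1/2:ℝ) := Real.rpow_nonneg hiψ _
  have hc1 : (((L:ℝ)^3 + L) ^ (1/2:ℝ)) ≤ CL L := le_max_right _ _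
  have := CL_one_le L
  calc (⨆ x, |g x|) + (∫ x, (deriv (g ∘ ⇑e) x) ^ 2) ^ (1/2:ℝ)
      ≤ (⨆ x, |g x|) + (((L:ℝ)^3 + L) ^ (1/2:ℝ)) * (∫ x, (deriv g x) ^ 2) ^ (1/2:ℝ) := by
        linarith
    _ ≤ CL L * ((⨆ x, |g x|) + (∫ x, (deriv g x) ^ 2) ^ (1/2:ℝ)) := by
        rw [mul_add]
        refine add_le_add (le_mul_of_one_le_left hS (CL_one_le L)) ?_
        exact mul_le_mul_of_nonneg_right hc1 hI

lemma lem_h1_meas (g : ℝ → ℝ) (hgm : Measurable g) :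
    Measurable fun x => (g x) ^ 2 + (deriv g x) ^ 2 :=
  (hgm.pow_const 2).add ((measurable_deriv _).pow_const 2)

lemma lem_h1norm_comp' {L K : NNReal} (e : ℝ ≃ₜ ℝ) (hLe : LipschitzWith L ⇑e)
    (hLs : LipschitzWith L ⇑e.symm) {g : ℝ → ℝ} (hg : LipschitzWith K g) (CL : ℝ)
    (hCL1 : 1 ≤ CL) (hCL2 : ((L:ℝ) ^ 3 + (L:ℝ)) ^ (1/2 : ℝ) ≤ CL) :
    H1norm (g ∘ ⇑e) ≤ CL * H1norm g := by
  have hcomp : ((g ∘ ⇑e) ∘ ⇑e.symm) = g := by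
    funext x; simp [Function.comp, e.apply_symm_apply]
  have hLs' : LipschitzWith L ⇑e.symm.symm := by rwa [Homeomorph.symm_symm]
  have h1 : ∫⁻ x, ENNReal.ofReal (((g ∘ ⇑e) x) ^ 2 + (deriv (g ∘ ⇑e) x) ^ 2)
      ≤ ((L^3 + L : NNReal) : ENNReal)
        * ∫⁻ x, ENNReal.ofReal ((g x) ^ 2 + (deriv g x) ^ 2) := by
    have := lem_lint_h1 e hLe hLs hg
    push_cast
    exact this
  have h2 : ∫⁻ x, ENNReal.ofReal ((g x) ^ 2 + (deriv g x) ^ 2)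
      ≤ ((L^3 + L : NNReal) : ENNReal)
        * ∫⁻ x, ENNReal.ofReal (((g ∘ ⇑e) x) ^ 2 + (deriv (g ∘ ⇑e) x) ^ 2) := by
    have := lem_lint_h1 e.symm hLs hLs' (hg.comp hLe)
    rw [hcomp] at this
    simp only [Function.comp_apply, Homeomorph.apply_symm_apply] at this
    push_cast
    exact this
  have hint : ∫ x, (((g ∘ ⇑e) x) ^ 2 + (deriv (g ∘ ⇑e) x) ^ 2)
      ≤ ((L^3 + L : NNReal) : ℝ) * ∫ x, ((g x) ^ 2 + (deriv g x) ^ 2) :=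
    lem_transfer (lem_h1_meas _ ((hg.continuous.measurable).comp e.measurable))
      (lem_h1_meas _ hg.continuous.measurable)
      (fun x => by positivity) (fun x => by positivity) h1 h2
  have hiψ : 0 ≤ ∫ x, ((g x) ^ 2 + (deriv g x) ^ 2) :=
    integral_nonneg fun x => by positivity
  have hiφ : 0 ≤ ∫ x, (((g ∘ ⇑e) x) ^ 2 + (deriv (g ∘ ⇑e) x) ^ 2) :=
    integral_nonneg fun x => by positivity
  unfold H1norm
  calc (∫ x, (((g ∘ ⇑e) x) ^ 2 + (deriv (g ∘ ⇑e) x) ^ 2)) ^ (1/2:ℝ)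
      ≤ (((L^3 + L : NNReal) : ℝ) * ∫ x, ((g x) ^ 2 + (deriv g x) ^ 2)) ^ (1/2:ℝ) :=
        Real.rpow_le_rpow hiφ hint (by norm_num)
    _ = (((L:ℝ)^3 + L) ^ (1/2:ℝ)) * (∫ x, ((g x) ^ 2 + (deriv g x) ^ 2)) ^ (1/2:ℝ) := by
        rw [Real.mul_rpow (by positivity) hiψ]; push_cast; ring_nf
    _ ≤ CL * (∫ x, ((g x) ^ 2 + (deriv g x) ^ 2)) ^ (1/2:ℝ) :=
        mul_le_mul_of_nonneg_right hCL2 (Real.rpow_nonneg hiψ _)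

lemma lem_memLp_comp {L : NNReal} (e : ℝ ≃ₜ ℝ) (hLs : LipschitzWith L ⇑e.symm)
    {h : ℝ → ℝ} (hm : Measurable h) (hh : MemLp h 2 (volume : Measure ℝ)) :
    MemLp (fun x => h (e x)) 2 (volume : Measure ℝ) := by
  have hm' : Measurable fun x => h (e x) := hm.comp e.measurable
  rw [memLp_two_iff_integrable_sq hm.aestronglyMeasurable] at hh
  rw [memLp_two_iff_integrable_sq hm'.aestronglyMeasurable]
  refine ⟨(hm'.pow_const 2).aestronglyMeasurable, ?_⟩
  rw [hasFiniteIntegral_def]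
  have key : ∫⁻ x, (‖h (e x) ^ 2‖₊ : ENNReal)
      ≤ L * ∫⁻ x, (‖h x ^ 2‖₊ : ENNReal) :=
    lem_lintegral_comp e hLs ((hm.pow_const 2).nnnorm.coe_nnreal_ennreal)
  refine lt_of_le_of_lt key ?_
  exact ENNReal.mul_lt_top (by simp) hh.2

lemma lem_L_pos {L : NNReal} (e : ℝ ≃ₜ ℝ) (hLs : LipschitzWith L ⇑e.symm) : 0 < (L:ℝ) := by
  have halip : AntilipschitzWith L ⇑e := hLs.to_rightInverse e.left_inv
  have h01 := halip.le_mul_dist 0 1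
  have hd : dist (0:ℝ) 1 = 1 := by simp [Real.dist_eq]
  rw [hd] at h01
  nlinarith [dist_nonneg (x := e 0) (y := e 1), L.coe_nonneg]

lemma lem_deriv_lower {L : NNReal} (e : ℝ ≃ₜ ℝ) (hLs : LipschitzWith L ⇑e.symm) {x : ℝ}
    (hd : DifferentiableAt ℝ (⇑e) x) : ((L:ℝ))⁻¹ ≤ |deriv (⇑e) x| := by
  have hL0 : 0 < (L:ℝ) := lem_L_pos e hLs
  have halip : AntilipschitzWith L ⇑e := hLs.to_rightInverse e.left_inv
  have ht := hd.hasDerivAt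
  rw [hasDerivAt_iff_tendsto_slope] at ht
  have htabs : Filter.Tendsto (fun y => |slope (⇑e) x y|) (nhdsWithin x {x}ᶜ)
      (nhds |deriv (⇑e) x|) := (continuous_abs.tendsto _).comp ht
  refine ge_of_tendsto htabs ?_
  refine eventually_mem_nhdsWithin.mono (fun y hy => ?_)
  have hxy : y ≠ x := hy
  have h1 : dist x y ≤ L * dist (e x) (e y) := halip.le_mul_dist x y
  have h2 : |y - x| ≤ L * |e y - e x| := by
    rw [Real.dist_eq, Real.dist_eq] at h1
    rw [abs_sub_comm y x, abs_sub_comm (e y) (e x)]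
    exact h1
  have h3 : 0 < |y - x| := by
    rw [abs_pos]; exact sub_ne_zero_of_ne hxy
  rw [slope_def_field, div_eq_mul_inv, abs_mul, abs_inv,
    inv_le_iff_one_le_mul₀' hL0]
  calc (1:ℝ) = |y - x| * |y - x|⁻¹ := (mul_inv_cancel₀ h3.ne').symm
    _ ≤ ((L:ℝ) * |e y - e x|) * |y - x|⁻¹ :=
        mul_le_mul_of_nonneg_right h2 (le_of_lt (inv_pos.mpr h3))
    _ = (L:ℝ) * (|e y - e x| * |y - x|⁻¹) := by ring

lemma lem_deriv_symm {L : NNReal} (e : ℝ ≃ₜ ℝ) (hLe : LipschitzWith L ⇑e)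
    (hLs : LipschitzWith L ⇑e.symm) :
    ∀ᵐ y, deriv (⇑e.symm) y = (deriv (⇑e) (e.symm y))⁻¹ ∧
      ((L:ℝ))⁻¹ ≤ |deriv (⇑e) (e.symm y)| := by
  have hLe' : LipschitzWith L ⇑e.symm.symm := by rwa [Homeomorph.symm_symm]
  have h1 : ∀ᵐ x, DifferentiableAt ℝ (⇑e) x := hLe.ae_differentiableAt
  have h2 : ∀ᵐ y, DifferentiableAt ℝ (⇑e) (e.symm y) := lem_ae_comp e.symm hLe' h1
  filter_upwards [h2] with y hy
  have hlow : ((L:ℝ))⁻¹ ≤ |deriv (⇑e) (e.symm y)| := lem_deriv_lower e hLs hy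
  have hL0 : 0 < (L:ℝ) := lem_L_pos e hLs
  have ht0 : deriv (⇑e) (e.symm y) ≠ 0 := by
    intro h; rw [h] at hlow; simp at hlow
    exact absurd hlow (not_le.mpr hL0)
  have hder : HasDerivAt (⇑e.symm) (deriv (⇑e) (e.symm y))⁻¹ y :=
    HasDerivAt.of_local_left_inverse (e.symm.continuous.continuousAt)
      hy.hasDerivAt ht0 (Filter.Eventually.of_forall fun z => e.apply_symm_apply z)
  exact ⟨hder.deriv, hlow⟩

lemma lem_memLp_symm {L : NNReal} (e : ℝ ≃ₜ ℝ) (hLe : LipschitzWith L ⇑e)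
    (hLs : LipschitzWith L ⇑e.symm)
    (hmem : MemLp (fun x => deriv (⇑e) x - 1) 2 (volume : Measure ℝ)) :
    MemLp (fun y => deriv (⇑e.symm) y - 1) 2 (volume : Measure ℝ) := by
  have hLe' : LipschitzWith L ⇑e.symm.symm := by rwa [Homeomorph.symm_symm]
  have hg1 : MemLp (fun y => deriv (⇑e) (e.symm y) - 1) 2 (volume : Measure ℝ) :=
    lem_memLp_comp e.symm hLe' ((measurable_deriv _).sub_const 1) hmem
  have hG : MemLp (fun y => (L:ℝ) * (deriv (⇑e) (e.symm y) - 1)) 2 (volume : Measure ℝ) :=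
    hg1.const_mul _
  refine hG.of_le ((measurable_deriv _).sub_const 1).aestronglyMeasurable ?_
  filter_upwards [lem_deriv_symm e hLe hLs] with y hy
  obtain ⟨hval, hlow⟩ := hy
  set t := deriv (⇑e) (e.symm y) with htdef
  have hL0 : 0 < (L:ℝ) := lem_L_pos e hLs
  have ht0 : t ≠ 0 := by
    intro h; rw [h] at hlow; simp at hlow
    exact absurd hlow (not_le.mpr hL0)
  rw [hval]
  rw [Real.norm_eq_abs, Real.norm_eq_abs, abs_mul]
  have habs : |t⁻¹ - 1| = |1 - t| * |t|⁻¹ := by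
    rw [← abs_inv]
    rw [← abs_mul]
    congr 1
    field_simp
  rw [habs]
  have h1 : |t|⁻¹ ≤ (L:ℝ) := by
    rw [inv_le_comm₀ (abs_pos.mpr ht0) hL0]
    exact hlow
  calc |1 - t| * |t|⁻¹ ≤ |1 - t| * (L:ℝ) := by
        exact mul_le_mul_of_nonneg_left h1 (abs_nonneg _)
    _ = |(L:ℝ)| * |t - 1| := by
        rw [abs_sub_comm, abs_of_pos hL0]; ring

lemma lem_memLp_deriv_comp {Lu Lv : NNReal} (u v : ℝ ≃ₜ ℝ)
    (hu : LipschitzWith Lu ⇑u) (hus : LipschitzWith Lu ⇑u.symm)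
    (hv : LipschitzWith Lv ⇑v) (hvs : LipschitzWith Lv ⇑v.symm)
    (hmu : MemLp (fun x => deriv (⇑u) x - 1) 2 (volume : Measure ℝ))
    (hmv : MemLp (fun x => deriv (⇑v) x - 1) 2 (volume : Measure ℝ)) :
    MemLp (fun x => deriv (⇑u ∘ ⇑v) x - 1) 2 (volume : Measure ℝ) := by
  have hg1 : MemLp (fun x => deriv (⇑u) (v x) - 1) 2 (volume : Measure ℝ) :=
    lem_memLp_comp v hvs ((measurable_deriv _).sub_const 1) hmu
  have hG : MemLp (fun x => (Lv:ℝ) * ‖deriv (⇑u) (v x) - 1‖ + ‖deriv (⇑v) x - 1‖) 2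
      (volume : Measure ℝ) := ((hg1.norm).const_mul _).add (hmv.norm)
  refine hG.of_le ((measurable_deriv _).sub_const 1).aestronglyMeasurable ?_
  filter_upwards [lem_chain v hv hvs hu] with x hx
  rw [Real.norm_eq_abs, hx]
  have hb : |deriv (⇑v) x| ≤ Lv := lem_deriv_le hv x
  have key : |deriv (⇑u) (v x) * deriv (⇑v) x - 1|
      ≤ (Lv:ℝ) * ‖deriv (⇑u) (v x) - 1‖ + ‖deriv (⇑v) x - 1‖ := by
    have h1 : deriv (⇑u) (v x) * deriv (⇑v) x - 1
        = (deriv (⇑u) (v x) - 1) * deriv (⇑v) x + (deriv (⇑v) x - 1) := by ring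
    rw [h1, Real.norm_eq_abs, Real.norm_eq_abs]
    calc |(deriv (⇑u) (v x) - 1) * deriv (⇑v) x + (deriv (⇑v) x - 1)|
        ≤ |(deriv (⇑u) (v x) - 1) * deriv (⇑v) x| + |deriv (⇑v) x - 1| := abs_add_le _ _
      _ ≤ (Lv:ℝ) * |deriv (⇑u) (v x) - 1| + |deriv (⇑v) x - 1| := by
          rw [abs_mul]
          have := abs_nonneg (deriv (⇑u) (v x) - 1)
          nlinarith
  refine le_trans key ?_
  rw [Real.norm_eq_abs]
  exact le_abs_self _

lemma lem_lip_of_sub_id {h : ℝ → ℝ} {K : NNReal} (H : LipschitzWith K (fun x => h x - x)) :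
    LipschitzWith (K + 1) h := by
  have := H.add LipschitzWith.id
  convert this using 1
  · rfl
  funext x; simp

lemma lem_InG_biLip {f : ℝ ≃ₜ ℝ} (hf : InG f) :
    ∃ L : NNReal, LipschitzWith L ⇑f ∧ LipschitzWith L ⇑f.symm := by
  obtain ⟨⟨_, K, hK⟩, ⟨_, K', hK'⟩, _⟩ := hf
  refine ⟨max K K' + 1, ?_, ?_⟩
  · exact lem_lip_of_sub_id (hK.weaken (le_max_left _ _))
  · exact lem_lip_of_sub_id (hK'.weaken (le_max_right _ _))

lemma lem_kappa_biLip {f : ℝ ≃ₜ ℝ} {κ : ℝ} (h : InGkappa f κ) :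
    LipschitzWith (κ.toNNReal + 1) ⇑f ∧ LipschitzWith (κ.toNNReal + 1) ⇑f.symm := by
  obtain ⟨⟨a, b, ha, hb, hab, ⟨b1, c1, hb1, hc1, hbc1, hfb, hfl⟩,
    ⟨b2, c2, hb2, hc2, hbc2, hsb, hsl⟩⟩, _⟩ := h
  constructor
  · refine lem_lip_of_sub_id (hfl.weaken ?_)
    exact Real.toNNReal_mono (by linarith)
  · refine lem_lip_of_sub_id (hsl.weaken ?_)
    exact Real.toNNReal_mono (by linarith)

lemma lem_InG_of_kappa {f : ℝ ≃ₜ ℝ} {κ : ℝ} (h : InGkappa f κ) : InG f := by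
  obtain ⟨⟨a, b, ha, hb, hab, ⟨b1, c1, hb1, hc1, hbc1, hfb, hfl⟩,
    ⟨b2, c2, hb2, hc2, hbc2, hsb, hsl⟩⟩, hmem⟩ := h
  exact ⟨⟨⟨b1, hfb⟩, ⟨c1.toNNReal, hfl⟩⟩, ⟨⟨b2, hsb⟩, ⟨c2.toNNReal, hsl⟩⟩, hmem⟩

lemma lem_InG_symm {f : ℝ ≃ₜ ℝ} (hf : InG f) : InG f.symm := by
  obtain ⟨L, hL, hLs⟩ := lem_InG_biLip hf
  obtain ⟨h1, h2, hmem⟩ := hf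
  refine ⟨h2, ?_, ?_⟩
  · rw [Homeomorph.symm_symm]; exact h1
  · exact lem_memLp_symm f hL hLs hmem

lemma lem_InG_trans {u v : ℝ ≃ₜ ℝ} (hu : InG u) (hv : InG v) : InG (u.trans v) := by
  obtain ⟨Lu, hLu, hLus⟩ := lem_InG_biLip hu
  obtain ⟨Lv, hLv, hLvs⟩ := lem_InG_biLip hv
  obtain ⟨⟨⟨Cu, hCu⟩, ⟨Ku, hKu⟩⟩, ⟨⟨Cu', hCu'⟩, ⟨Ku', hKu'⟩⟩, hmu⟩ := hu
  obtain ⟨⟨⟨Cv, hCv⟩, ⟨Kv, hKv⟩⟩, ⟨⟨Cv', hCv'⟩, ⟨Kv', hKv'⟩⟩, hmv⟩ := hv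
  have hco : ⇑(u.trans v) = ⇑v ∘ ⇑u := rfl
  have hcos : ⇑(u.trans v).symm = ⇑u.symm ∘ ⇑v.symm := rfl
  refine ⟨⟨⟨Cv + Cu, fun x => ?_⟩, ⟨Kv * Lu + Ku, ?_⟩⟩,
    ⟨⟨Cu' + Cv', fun x => ?_⟩, ⟨Ku' * Lv + Kv', ?_⟩⟩, ?_⟩
  · rw [hco]
    calc |v (u x) - x| ≤ |v (u x) - u x| + |u x - x| := abs_sub_le _ _ _
      _ ≤ Cv + Cu := add_le_add (hCv (u x)) (hCu x)
  · have : LipschitzWith (Kv * Lu + Ku)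
        (fun x => ((fun y => v y - y) ∘ ⇑u) x + (u x - x)) :=
      ((hKv.comp hLu).add hKu)
    convert this using 1
    funext x; simp [hco, Function.comp]
  · rw [hcos]
    calc |u.symm (v.symm x) - x| ≤ |u.symm (v.symm x) - v.symm x| + |v.symm x - x| :=
          abs_sub_le _ _ _
      _ ≤ Cu' + Cv' := add_le_add (hCu' (v.symm x)) (hCv' x)
  · have : LipschitzWith (Ku' * Lv + Kv')
        (fun x => ((fun y => u.symm y - y) ∘ ⇑v.symm) x + (v.symm x - x)) :=
      ((hKu'.comp hLvs).add hKv')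
    convert this using 1
    funext x; simp [hcos, Function.comp]
  · have := lem_memLp_deriv_comp v u hLv hLvs hLu hLus hmv hmu
    rwa [← hco] at this

lemma lem_vnorm_nonneg (g : ℝ → ℝ) : 0 ≤ Vnorm g :=
  add_nonneg (lem_sup_nonneg g)
    (Real.rpow_nonneg (integral_nonneg fun x => sq_nonneg _) _)

lemma lem_h1norm_nonneg (g : ℝ → ℝ) : 0 ≤ H1norm g :=
  Real.rpow_nonneg (integral_nonneg fun x => by positivity) _

lemma lem_ediff_nonneg (A B : LagCoord) : 0 ≤ EDiff A B :=
  add_nonneg (add_nonneg (lem_vnorm_nonneg _) (lem_h1norm_nonneg _)) (lem_vnorm_nonneg _)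

lemma lem_ediff_comp {L : NNReal} (e : ℝ ≃ₜ ℝ) (hLe : LipschitzWith L ⇑e)
    (hLs : LipschitzWith L ⇑e.symm) (A B : LagCoord)
    (h1 : ∃ K : NNReal, LipschitzWith K (fun x => A.y x - B.y x))
    (h2 : ∃ K : NNReal, LipschitzWith K (fun x => A.U x - B.U x))
    (h3 : ∃ K : NNReal, LipschitzWith K (fun x => A.H x - B.H x)) :
    EDiff (comp A ⇑e) (comp B ⇑e) ≤ CL L * EDiff A B := by
  obtain ⟨K1, hK1⟩ := h1
  obtain ⟨K2, hK2⟩ := h2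
  obtain ⟨K3, hK3⟩ := h3
  have ey : (fun x => (comp A ⇑e).y x - (comp B ⇑e).y x)
      = (fun x => A.y x - B.y x) ∘ ⇑e := rfl
  have eU : (fun x => (comp A ⇑e).U x - (comp B ⇑e).U x)
      = (fun x => A.U x - B.U x) ∘ ⇑e := rfl
  have eH : (fun x => (comp A ⇑e).H x - (comp B ⇑e).H x)
      = (fun x => A.H x - B.H x) ∘ ⇑e := rfl
  unfold EDiff
  rw [ey, eU, eH, mul_add, mul_add]
  exact add_le_add (add_le_add (lem_vnorm_comp e hLe hLs hK1)
    (lem_h1norm_comp' e hLe hLs hK2 (CL L) (CL_one_le L) (le_max_right _ _)))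
    (lem_vnorm_comp e hLe hLs hK3)

lemma lem_InG_refl : InG (Homeomorph.refl ℝ) := by
  refine ⟨⟨⟨0, fun x => by simp⟩, ⟨0, by
    convert LipschitzWith.const (b := (0:ℝ)) using 1
    funext x; simp⟩⟩, ⟨⟨0, fun x => by simp⟩, ⟨0, by
    convert LipschitzWith.const (b := (0:ℝ)) using 1
    funext x; simp⟩⟩, ?_⟩
  have : (fun x : ℝ => deriv (⇑(Homeomorph.refl ℝ)) x - 1) = fun _ => (0:ℝ) := by
    funext x
    have : ⇑(Homeomorph.refl ℝ) = fun y : ℝ => y := rfl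
    rw [this, deriv_id'']
    ring
  rw [this]
  exact MemLp.zero'


lemma lem_J_nonempty (A B : LagCoord) :
    {r : ℝ | ∃ f₁ f₂ : ℝ ≃ₜ ℝ, InG f₁ ∧ InG f₂ ∧
      r = EDiff (comp A ⇑f₁) B + EDiff A (comp B ⇑f₂)}.Nonempty :=
  ⟨_, Homeomorph.refl ℝ, Homeomorph.refl ℝ, lem_InG_refl, lem_InG_refl, rfl⟩

lemma lem_J_bdd (A B : LagCoord) :
    BddBelow {r : ℝ | ∃ f₁ f₂ : ℝ ≃ₜ ℝ, InG f₁ ∧ InG f₂ ∧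
      r = EDiff (comp A ⇑f₁) B + EDiff A (comp B ⇑f₂)} := by
  refine ⟨0, fun r hr => ?_⟩
  obtain ⟨f₁, f₂, _, _, rfl⟩ := hr
  exact add_nonneg (lem_ediff_nonneg _ _) (lem_ediff_nonneg _ _)

/-- For `X_α, X_β ∈ F` and `f ∈ G_κ` one has
`J(X_α∘f, X_β) ≤ C J(X_α, X_β)` for a constant `C ≥ 1` depending only on
`κ`. -/
theorem stmt19 (κ : ℝ) (hκ : 0 ≤ κ) :
    ∃ C : ℝ, 1 ≤ C ∧ ∀ (A B : LagCoord) (f : ℝ ≃ₜ ℝ),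
      InE A → InE B → InGkappa f κ →
      Jdist (comp A ⇑f) B ≤ C * Jdist A B := by
  set L : NNReal := κ.toNNReal + 1 with hLdef
  refine ⟨CL L, CL_one_le L, fun A B f hA hB hf => ?_⟩
  set C := CL L with hCdef
  have hC1 : 1 ≤ C := CL_one_le L
  have hC0 : 0 < C := lt_of_lt_of_le one_pos hC1
  obtain ⟨hLe, hLs⟩ := lem_kappa_biLip hf
  have hInGf : InG f := lem_InG_of_kappa hf
  -- key step
  have key : ∀ r ∈ {r : ℝ | ∃ f₁ f₂ : ℝ ≃ₜ ℝ, InG f₁ ∧ InG f₂ ∧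
      r = EDiff (comp A ⇑f₁) B + EDiff A (comp B ⇑f₂)},
      Jdist (comp A ⇑f) B ≤ C * r := by
    rintro r ⟨f₁, f₂, h₁, h₂, rfl⟩
    set g₁ := f₁.trans f.symm with hg₁def
    set g₂ := f.trans f₂ with hg₂def
    have hg₁ : InG g₁ := lem_InG_trans h₁ (lem_InG_symm hInGf)
    have hg₂ : InG g₂ := lem_InG_trans hInGf h₂
    have hmem : EDiff (comp (comp A ⇑f) ⇑g₁) B + EDiff (comp A ⇑f) (comp B ⇑g₂)
        ∈ {r : ℝ | ∃ e₁ e₂ : ℝ ≃ₜ ℝ, InG e₁ ∧ InG e₂ ∧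
          r = EDiff (comp (comp A ⇑f) ⇑e₁) B + EDiff (comp A ⇑f) (comp B ⇑e₂)} :=
      ⟨g₁, g₂, hg₁, hg₂, rfl⟩
    have hstep : Jdist (comp A ⇑f) B
        ≤ EDiff (comp (comp A ⇑f) ⇑g₁) B + EDiff (comp A ⇑f) (comp B ⇑g₂) :=
      csInf_le (lem_J_bdd _ _) hmem
    -- first term equals EDiff (comp A ⇑f₁) B
    have heq1 : comp (comp A ⇑f) ⇑g₁ = comp A ⇑f₁ := by
      unfold comp
      simp only [LagCoord.mk.injEq]
      refine ⟨?_, ?_, ?_⟩ <;> funext x <;>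
        simp [hg₁def, Function.comp, Homeomorph.trans_apply,
          Homeomorph.apply_symm_apply]
    -- second term
    have heq2 : comp B ⇑g₂ = comp (comp B ⇑f₂) ⇑f := by
      unfold comp
      simp only [LagCoord.mk.injEq]
      refine ⟨?_, ?_, ?_⟩ <;> funext x <;>
        simp [hg₂def, Function.comp, Homeomorph.trans_apply]
    obtain ⟨L₂, hL₂, hL₂s⟩ := lem_InG_biLip h₂
    obtain ⟨⟨Kay, hKay⟩, ⟨KaU, hKaU⟩, ⟨KaH, hKaH⟩, _⟩ := hA
    obtain ⟨⟨Kby, hKby⟩, ⟨KbU, hKbU⟩, ⟨KbH, hKbH⟩, _⟩ := hB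
    have hbound : EDiff (comp A ⇑f) (comp B ⇑g₂) ≤ C * EDiff A (comp B ⇑f₂) := by
      rw [heq2]
      have := lem_ediff_comp f hLe hLs A (comp B ⇑f₂)
        ⟨Kay + Kby * L₂, hKay.sub (hKby.comp hL₂)⟩
        ⟨KaU + KbU * L₂, hKaU.sub (hKbU.comp hL₂)⟩
        ⟨KaH + KbH * L₂, hKaH.sub (hKbH.comp hL₂)⟩
      exact this
    have e1nn : 0 ≤ EDiff (comp A ⇑f₁) B := lem_ediff_nonneg _ _
    have e2nn : 0 ≤ EDiff A (comp B ⇑f₂) := lem_ediff_nonneg _ _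
    calc Jdist (comp A ⇑f) B
        ≤ EDiff (comp (comp A ⇑f) ⇑g₁) B + EDiff (comp A ⇑f) (comp B ⇑g₂) := hstep
      _ ≤ EDiff (comp A ⇑f₁) B + C * EDiff A (comp B ⇑f₂) := by
          rw [heq1]; exact add_le_add_right hbound _
      _ ≤ C * (EDiff (comp A ⇑f₁) B + EDiff A (comp B ⇑f₂)) := by nlinarith
  have hfinal : Jdist (comp A ⇑f) B / C ≤ Jdist A B := by
    refine le_csInf (lem_J_nonempty A B) (fun r hr => ?_)
    rw [div_le_iff₀ hC0]
    calc Jdist (comp A ⇑f) B ≤ C * r := key r hr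
      _ = r * C := mul_comm _ _
  calc Jdist (comp A ⇑f) B = (Jdist (comp A ⇑f) B / C) * C := by field_simp
    _ ≤ Jdist A B * C := mul_le_mul_of_nonneg_right hfinal (le_of_lt hC0)
    _ = C * Jdist A B := mul_comm _ _
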